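/- Improved accuracy bound for the transposed truncated randomized SVD: let A ∈ ℝ^{m×n}, let k ≥ 1 and p ≥ 0 be integers with ℓ := k + p ≤ min{m, n}, and let P ∈ ℝ^{n×ℓ} have orthonormal columns. Let C be a best rank-k approximation of AP ∈ ℝ^{m×ℓ} in spectral norm (rank C ≤ k and ‖AP − C‖ ≤ ‖AP − D‖ for every D of rank ≤ k), and set A_(k) := C Pᵀ. Then ‖A − A_(k)‖ ≤ σ_{k+1}(AP) + ‖A(I_n − PPᵀ)‖, and moreover σ_{n−p+1}(A) ≤ σ_{k+1}(AP) ≤ σ_{k+1}(A). -/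

import Mathlib

open Matrix
open scoped Matrix.Norms.L2Operator

/-- Spectral norm (largest singular value) of a real matrix. -/
noncomputable def specNorm {a b : ℕ} (M : Matrix (Fin a) (Fin b) ℝ) : ℝ :=
  ‖LinearMap.toContinuousLinearMap (Matrix.toEuclideanLin M)‖

/-- The `j`-th largest singular value of a real matrix (`j ≥ 1`), characterized via the
Eckart–Young theorem as the minimal spectral-norm distance to matrices of rank `< j`;
it is `0` when `j` exceeds the smaller dimension. -/
noncomputable def singVal {a b : ℕ} (M : Matrix (Fin a) (Fin b) ℝ) (j : ℕ) : ℝ :=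
  sInf {r : ℝ | ∃ D : Matrix (Fin a) (Fin b) ℝ, D.rank < j ∧ r = specNorm (M - D)}

/-- The matrix of the first `k` columns of `M`. -/
def colSub {a b : ℕ} (M : Matrix (Fin a) (Fin b) ℝ) (k : ℕ) (hk : k ≤ b) :
    Matrix (Fin a) (Fin k) ℝ :=
  M.submatrix id fun j => ⟨j.1, lt_of_lt_of_le j.2 hk⟩

/-- The leading `r × c` submatrix of `M`. -/
def subUL {a b : ℕ} (M : Matrix (Fin a) (Fin b) ℝ) (r c : ℕ) (hr : r ≤ a) (hc : c ≤ b) :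
    Matrix (Fin r) (Fin c) ℝ :=
  M.submatrix (fun i => ⟨i.1, lt_of_lt_of_le i.2 hr⟩) (fun j => ⟨j.1, lt_of_lt_of_le j.2 hc⟩)

lemma specNorm_eq_norm {a b : ℕ} (M : Matrix (Fin a) (Fin b) ℝ) : specNorm M = ‖M‖ := rfl

lemma matrix_rank_add_le {a b : ℕ} (M N : Matrix (Fin a) (Fin b) ℝ) :
    (M + N).rank ≤ M.rank + N.rank := by
  have h : LinearMap.range (M + N).mulVecLin ≤
      LinearMap.range M.mulVecLin ⊔ LinearMap.range N.mulVecLin := by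
    rintro x ⟨v, rfl⟩
    rw [Matrix.mulVecLin_add]
    exact Submodule.add_mem_sup ⟨v, rfl⟩ ⟨v, rfl⟩
  calc (M + N).rank
      ≤ Module.finrank ℝ (LinearMap.range M.mulVecLin ⊔ LinearMap.range N.mulVecLin :
          Submodule ℝ (Fin a → ℝ)) := Submodule.finrank_mono h
    _ ≤ M.rank + N.rank := Submodule.finrank_add_le_finrank_add_finrank _ _

lemma singVal_le {a b : ℕ} (M D : Matrix (Fin a) (Fin b) ℝ) (j : ℕ) (hD : D.rank < j) :
    singVal M j ≤ specNorm (M - D) := by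
  apply csInf_le
  · exact ⟨0, by rintro r ⟨E, -, rfl⟩; exact norm_nonneg _⟩
  · exact ⟨D, hD, rfl⟩

lemma le_singVal_of {a b : ℕ} (M : Matrix (Fin a) (Fin b) ℝ) (j : ℕ) (hj : 0 < j) (r : ℝ)
    (h : ∀ D : Matrix (Fin a) (Fin b) ℝ, D.rank < j → r ≤ specNorm (M - D)) :
    r ≤ singVal M j := by
  apply le_csInf
  · exact ⟨specNorm (M - 0), 0, by simpa [Matrix.rank_zero] using hj, rfl⟩
  · rintro s ⟨D, hD, rfl⟩
    exact h D hD

/-- improved accuracy bound for the transposed truncated randomized SVD.  With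
`ℓ = k + p ≤ min{m,n}`, `P` an `n × ℓ` matrix with orthonormal columns, and `C` a best rank-`k`
spectral-norm approximation of `AP`, the truncated approximation `A_(k) = C Pᵀ` satisfies
`‖A - A_(k)‖ ≤ σ_{k+1}(AP) + ‖A(I - PPᵀ)‖` and `σ_{n-p+1}(A) ≤ σ_{k+1}(AP) ≤ σ_{k+1}(A)`. -/
theorem randomized_truncated_svd_error_bound_transposed
    (m n k p : ℕ) (hk : 1 ≤ k) (hl : k + p ≤ min m n)
    (A : Matrix (Fin m) (Fin n) ℝ)
    (P : Matrix (Fin n) (Fin (k + p)) ℝ) (hP : Pᵀ * P = 1)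
    (C : Matrix (Fin m) (Fin (k + p)) ℝ) (hCrank : C.rank ≤ k)
    (hCbest : ∀ D : Matrix (Fin m) (Fin (k + p)) ℝ, D.rank ≤ k →
      specNorm (A * P - C) ≤ specNorm (A * P - D)) :
    specNorm (A - C * Pᵀ) ≤ singVal (A * P) (k + 1) + specNorm (A * (1 - P * Pᵀ)) ∧
    singVal A (n - p + 1) ≤ singVal (A * P) (k + 1) ∧
    singVal (A * P) (k + 1) ≤ singVal A (k + 1) := by
  have hln : k + p ≤ n := le_trans hl (min_le_right _ _)
  haveI : NeZero (k + p) := ⟨by omega⟩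
  have hPt : Pᴴ = Pᵀ := by ext i j; simp [conjTranspose_apply]
  -- norm of P and Pᵀ
  have hnormP : ‖P‖ = 1 := by
    have h1 := Matrix.l2_opNorm_conjTranspose_mul_self P
    rw [hPt, hP] at h1
    have h2 : ‖(1 : Matrix (Fin (k + p)) (Fin (k + p)) ℝ)‖ = 1 := norm_one
    rw [h2] at h1
    have h3 := norm_nonneg P
    nlinarith [h1, h3]
  have hnormPt : ‖Pᵀ‖ = 1 := by
    rw [← hPt, Matrix.l2_opNorm_conjTranspose]; exact hnormP
  -- rank facts
  have hrankP : P.rank = k + p := by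
    rw [← Matrix.rank_transpose_mul_self, hP, Matrix.rank_one, Fintype.card_fin]
  have hrank1sub : (1 - P * Pᵀ).rank ≤ n - (k + p) := by
    have hmul : (1 - P * Pᵀ) * P = 0 := by
      rw [Matrix.sub_mul, Matrix.one_mul, Matrix.mul_assoc, hP, Matrix.mul_one, sub_self]
    have h := Matrix.rank_add_rank_le_card_of_mul_eq_zero hmul
    rw [hrankP, Fintype.card_fin] at h
    omega
  -- C attains the (k+1)-st singular value bound
  have hC : specNorm (A * P - C) ≤ singVal (A * P) (k + 1) :=
    le_singVal_of _ _ (Nat.succ_pos k) _ (fun D hD => hCbest D (Nat.lt_succ_iff.mp hD))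
  refine ⟨?_, ?_, ?_⟩
  · -- first bound
    have hid : A - C * Pᵀ = (A * P - C) * Pᵀ + A * (1 - P * Pᵀ) := by
      rw [Matrix.sub_mul, Matrix.mul_sub, Matrix.mul_one, ← Matrix.mul_assoc]
      abel
    calc specNorm (A - C * Pᵀ)
        = ‖(A * P - C) * Pᵀ + A * (1 - P * Pᵀ)‖ := by rw [specNorm_eq_norm, hid]
      _ ≤ ‖(A * P - C) * Pᵀ‖ + ‖A * (1 - P * Pᵀ)‖ := norm_add_le _ _
      _ ≤ ‖A * P - C‖ * ‖Pᵀ‖ + ‖A * (1 - P * Pᵀ)‖ :=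
          add_le_add_left (Matrix.l2_opNorm_mul _ _) _
      _ = specNorm (A * P - C) + specNorm (A * (1 - P * Pᵀ)) := by
          rw [hnormPt, mul_one]; rfl
      _ ≤ singVal (A * P) (k + 1) + specNorm (A * (1 - P * Pᵀ)) := add_le_add_left hC _
  · -- σ_{n-p+1}(A) ≤ σ_{k+1}(AP)
    apply le_singVal_of _ _ (Nat.succ_pos k)
    intro D hD
    set E : Matrix (Fin m) (Fin n) ℝ := D * Pᵀ + A * (1 - P * Pᵀ) with hE
    have hrankE : E.rank < n - p + 1 := by
      have h1 : (D * Pᵀ).rank ≤ k :=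
        le_trans (Matrix.rank_mul_le_left D Pᵀ) (Nat.lt_succ_iff.mp hD)
      have h2 : (A * (1 - P * Pᵀ)).rank ≤ n - (k + p) :=
        le_trans (Matrix.rank_mul_le_right _ _) hrank1sub
      have h3 := matrix_rank_add_le (D * Pᵀ) (A * (1 - P * Pᵀ))
      rw [← hE] at h3
      omega
    have hAE : A - E = (A * P - D) * Pᵀ := by
      rw [hE, Matrix.sub_mul, Matrix.mul_sub, Matrix.mul_one, ← Matrix.mul_assoc]
      abel
    calc singVal A (n - p + 1) ≤ specNorm (A - E) := singVal_le _ _ _ hrankE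
      _ ≤ ‖A * P - D‖ * ‖Pᵀ‖ := by
          rw [specNorm_eq_norm, hAE]; exact Matrix.l2_opNorm_mul _ _
      _ = specNorm (A * P - D) := by rw [hnormPt, mul_one]; rfl
  · -- σ_{k+1}(AP) ≤ σ_{k+1}(A)
    apply le_singVal_of _ _ (Nat.succ_pos k)
    intro D hD
    calc singVal (A * P) (k + 1)
        ≤ specNorm (A * P - D * P) :=
          singVal_le _ _ _ (lt_of_le_of_lt (Matrix.rank_mul_le_left D P) hD)
      _ = ‖(A - D) * P‖ := by rw [← Matrix.sub_mul]; rfl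
      _ ≤ ‖A - D‖ * ‖P‖ := Matrix.l2_opNorm_mul _ _
      _ = specNorm (A - D) := by rw [hnormP, mul_one]; rfl
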